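/- Let a be an A_1-bounded positive integer vector of dimension k > 1 with trace τ and κ = kτ + 1. Then for every n ≥ 1, A_n modulo κ lies in the interval [A_1 - τ + 1, A_1 + τ - 1]; in particular A_n - κ(n-1) ∈ [A_1 - τ + 1, A_1 + τ - 1]. -/
import Mathlib

open scoped Classical

/-- number of values of the sequence `S` (indexed from 1) lying in `[1, N]`. -/
noncomputable def cntv (S : ℕ → ℕ) (N : ℕ) : ℕ :=
  ((Finset.Icc 1 N).filter (fun x => ∃ i, 1 ≤ i ∧ S i = x)).card

lemma seq_ge {S : ℕ → ℕ} (hS : StrictMonoOn S (Set.Ici 1))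
    (hpos : ∀ i, 1 ≤ i → 1 ≤ S i) : ∀ l, 1 ≤ l → l ≤ S l := by
  intro l hl
  induction l, hl using Nat.le_induction with
  | base => exact hpos 1 le_rfl
  | succ p hp ih =>
    have h2 : S p < S (p+1) := hS (by simpa using hp) (by simp) (Nat.lt_succ_self p)
    omega

lemma cntv_ge {S : ℕ → ℕ} (hS : StrictMonoOn S (Set.Ici 1))
    (hpos : ∀ i, 1 ≤ i → 1 ≤ S i) {t N : ℕ} (ht : 1 ≤ t) (hle : S t ≤ N) :
    t ≤ cntv S N := by
  have hsub : (Finset.Icc 1 t).image S ⊆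
      (Finset.Icc 1 N).filter (fun x => ∃ i, 1 ≤ i ∧ S i = x) := by
    intro x hx
    simp only [Finset.mem_image, Finset.mem_Icc] at hx
    obtain ⟨i, ⟨h1, h2⟩, rfl⟩ := hx
    have hSi : S i ≤ S t := by
      rcases Nat.eq_or_lt_of_le h2 with h | h
      · subst h; rfl
      · exact le_of_lt (hS (by simpa using h1) (by simpa using ht) h)
    simp only [Finset.mem_filter, Finset.mem_Icc]
    exact ⟨⟨hpos i h1, le_trans hSi hle⟩, i, h1, rfl⟩
  have hinj : Set.InjOn S (Finset.Icc 1 t) := by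
    intro x hx y hy hxy
    simp only [Finset.coe_Icc, Set.mem_Icc] at hx hy
    exact hS.injOn (by simpa using hx.1) (by simpa using hy.1) hxy
  calc t = ((Finset.Icc 1 t).image S).card := by
        rw [Finset.card_image_of_injOn hinj, Nat.card_Icc]; omega
    _ ≤ _ := Finset.card_le_card hsub

lemma cntv_le {S : ℕ → ℕ} (hS : StrictMonoOn S (Set.Ici 1))
    {t N : ℕ} (hlt : N < S (t+1)) : cntv S N ≤ t := by
  have hsub : (Finset.Icc 1 N).filter (fun x => ∃ i, 1 ≤ i ∧ S i = x) ⊆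
      (Finset.Icc 1 t).image S := by
    intro x hx
    simp only [Finset.mem_filter, Finset.mem_Icc] at hx
    obtain ⟨⟨_, hxN⟩, i, h1, rfl⟩ := hx
    have hit : i ≤ t := by
      by_contra hc
      have : S (t+1) ≤ S i := by
        rcases Nat.eq_or_lt_of_le (show t+1 ≤ i by omega) with h | h
        · subst h; rfl
        · exact le_of_lt (hS (by simp) (by simp; omega) h)
      omega
    exact Finset.mem_image.2 ⟨i, Finset.mem_Icc.2 ⟨h1, hit⟩, rfl⟩
  calc cntv S N ≤ ((Finset.Icc 1 t).image S).card := Finset.card_le_card hsub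
    _ ≤ t := le_trans Finset.card_image_le (by rw [Nat.card_Icc]; omega)

lemma cntv_partition {A B : ℕ → ℕ}
    (hdich : ∀ m, 1 ≤ m →
      ((∃ n, 1 ≤ n ∧ A n = m) ∧ ¬(∃ n, 1 ≤ n ∧ B n = m)) ∨
      (¬(∃ n, 1 ≤ n ∧ A n = m) ∧ (∃ n, 1 ≤ n ∧ B n = m))) (N : ℕ) :
    cntv A N + cntv B N = N := by
  unfold cntv
  have h1 : ((Finset.Icc 1 N).filter (fun x => ∃ i, 1 ≤ i ∧ B i = x)) =
      ((Finset.Icc 1 N).filter (fun x => ¬ ∃ i, 1 ≤ i ∧ A i = x)) := by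
    apply Finset.filter_congr
    intro x hx
    simp only [Finset.mem_Icc] at hx
    rcases hdich x hx.1 with ⟨hA, hB⟩ | ⟨hA, hB⟩ <;> simp [hA, hB]
  rw [h1, Finset.card_filter_add_card_filter_not, Nat.card_Icc]
  omega

/-- `A` and `B` (indexed from 1) are complementary strictly increasing sequences
of positive integers: every positive integer lies in exactly one of their ranges. -/
def CompPair (A B : ℕ → ℕ) : Prop :=
  StrictMonoOn A (Set.Ici 1) ∧ StrictMonoOn B (Set.Ici 1) ∧
  (∀ n, 1 ≤ n → 1 ≤ A n) ∧ (∀ n, 1 ≤ n → 1 ≤ B n) ∧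
  ∀ m, 1 ≤ m →
    ((∃ n, 1 ≤ n ∧ A n = m) ∧ ¬(∃ n, 1 ≤ n ∧ B n = m)) ∨
    (¬(∃ n, 1 ≤ n ∧ A n = m) ∧ (∃ n, 1 ≤ n ∧ B n = m))

/-- `(A, B)` is the anti-recurrence pair for the positive linear form `a` of dimension `k`:
`A n = Σ_{j=1}^k a_j * B_{(n-1)k+j}` for all `n ≥ 1`. -/
def AntiRec (k : ℕ) (a : Fin k → ℕ) (A B : ℕ → ℕ) : Prop :=
  CompPair A B ∧
  ∀ n, 1 ≤ n → A n = ∑ j : Fin k, a j * B ((n - 1) * k + (j : ℕ) + 1)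

set_option maxHeartbeats 1000000 in
/-- For an A₁-bounded form, A n - κ(n-1) lies in [A 1 - τ + 1, A 1 + τ - 1]. -/
theorem stmt16 (k : ℕ) (hk : 1 < k) (a : Fin k → ℕ) (ha : ∀ j, 0 < a j)
    (A B : ℕ → ℕ) (h : AntiRec k a A B)
    (hbdd : (∑ j : Fin k, ((j : ℕ) + 1) * a j) ≤ (k - 1) * (∑ j : Fin k, a j) + 2) :
    ∀ n, 1 ≤ n →
      (A 1 : ℤ) - (∑ j : Fin k, a j) + 1
          ≤ (A n : ℤ) - (k * (∑ j : Fin k, a j) + 1) * ((n : ℤ) - 1) ∧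
      (A n : ℤ) - (k * (∑ j : Fin k, a j) + 1) * ((n : ℤ) - 1)
          ≤ (A 1 : ℤ) + (∑ j : Fin k, a j) - 1 := by
  obtain ⟨⟨hAm, hBm, hApos, hBpos, hdich⟩, hrec⟩ := h
  set τ : ℕ := ∑ j : Fin k, a j with hτdef
  have hτk : k ≤ τ := by
    calc k = ∑ _j : Fin k, 1 := by simp
      _ ≤ τ := Finset.sum_le_sum (fun j _ => ha j)
  have hτ2 : 2 ≤ τ := le_trans hk hτk
  have hτpos : 0 < τ := by omega
  have hkpos : 0 < k := by omega
  -- basic monotonicity helpers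
  have hAmono : ∀ i j : ℕ, 1 ≤ i → i ≤ j → A i ≤ A j := by
    intro i j h1 h2
    exact hAm.monotoneOn (by simpa using h1) (by simp; omega) h2
  have hBmono : ∀ i j : ℕ, 1 ≤ i → i ≤ j → B i ≤ B j := by
    intro i j h1 h2
    exact hBm.monotoneOn (by simpa using h1) (by simp; omega) h2
  have hBge : ∀ l, 1 ≤ l → l ≤ B l := seq_ge hBm hBpos
  -- counting identities
  have hpart : ∀ N, cntv A N + cntv B N = N := cntv_partition hdich
  have hBid : ∀ t, 1 ≤ t → B t = t + cntv A (B t) := by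
    intro t ht
    have h1 : cntv B (B t) ≤ t :=
      cntv_le hBm (hBm (by simpa using ht) (by simp) (Nat.lt_succ_self t))
    have h2 : t ≤ cntv B (B t) := cntv_ge hBm hBpos ht le_rfl
    have h3 := hpart (B t)
    omega
  have hAid : ∀ i, 1 ≤ i → A i = i + cntv B (A i) := by
    intro i hi
    have h1 : cntv A (A i) ≤ i :=
      cntv_le hAm (hAm (by simpa using hi) (by simp) (Nat.lt_succ_self i))
    have h2 : i ≤ cntv A (A i) := cntv_ge hAm hApos hi le_rfl
    have h3 := hpart (A i)
    omega
  -- distinguished indices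
  obtain ⟨j0, hj0v⟩ : ∃ j : Fin k, (j : ℕ) = 0 := ⟨⟨0, hkpos⟩, rfl⟩
  obtain ⟨jk, hjkv⟩ : ∃ j : Fin k, (j : ℕ) = k - 1 := ⟨⟨k-1, by omega⟩, rfl⟩
  have hne : j0 ≠ jk := by
    intro he
    rw [he] at hj0v
    omega
  have two_term : ∀ (f : Fin k → ℕ),
      a j0 * f j0 + a jk * f jk ≤ ∑ j : Fin k, a j * f j := by
    intro f
    calc a j0 * f j0 + a jk * f jk
        = ∑ j ∈ ({j0, jk} : Finset (Fin k)), a j * f j :=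
          (Finset.sum_pair (f := fun j => a j * f j) hne).symm
      _ ≤ ∑ j : Fin k, a j * f j := Finset.sum_le_sum_of_subset (Finset.subset_univ _)
  -- A 1 is bigger than B k
  have hrec1 : A 1 = ∑ j : Fin k, a j * B ((j : ℕ) + 1) := by
    have := hrec 1 le_rfl
    simpa using this
  have hA1gtBk : B k < A 1 := by
    have h2 := two_term (fun j => B ((j : ℕ) + 1))
    rw [← hrec1, hj0v, hjkv] at h2
    have ek : k - 1 + 1 = k := by omega
    rw [ek] at h2
    have h3 : 1 ≤ a j0 * B (0 + 1) := Nat.mul_pos (ha j0) (hBpos (0+1) le_rfl)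
    have h4 : B k ≤ a jk * B k := Nat.le_mul_of_pos_left _ (ha jk)
    omega
  -- B l = l for small l
  have hBsmall : ∀ l, 1 ≤ l → l ≤ k → B l = l := by
    intro l h1 h2
    have hge := hBge l h1
    have hall : ∀ x ∈ Finset.Icc 1 l, (∃ i, 1 ≤ i ∧ B i = x) := by
      intro x hx
      simp only [Finset.mem_Icc] at hx
      rcases hdich x hx.1 with ⟨⟨i, hi, hAi⟩, _⟩ | ⟨_, hB⟩
      · exfalso
        have h5 : A 1 ≤ A i := hAmono 1 i le_rfl hi
        have h6 : k ≤ B k := hBge k (by omega)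
        omega
      · exact hB
    have hcard : l ≤ cntv B l := by
      unfold cntv
      rw [Finset.filter_true_of_mem hall, Nat.card_Icc]
      omega
    by_contra hc
    have hlt : l < B ((l-1)+1) := by
      have he : l - 1 + 1 = l := by omega
      rw [he]; omega
    have := cntv_le hBm hlt
    omega
  have hA1 : A 1 = ∑ j : Fin k, ((j : ℕ) + 1) * a j := by
    rw [hrec1]
    apply Finset.sum_congr rfl
    intro j _
    rw [hBsmall ((j : ℕ) + 1) (by omega) (by have := j.isLt; omega)]
    ring
  -- bounds on A 1
  have hPge : τ + (k - 1) ≤ A 1 := by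
    have hsplit : A 1 = (∑ j : Fin k, (j : ℕ) * a j) + τ := by
      rw [hA1, hτdef, ← Finset.sum_add_distrib]
      apply Finset.sum_congr rfl
      intro j _
      ring
    have hterm : (k - 1) * a jk ≤ ∑ j : Fin k, (j : ℕ) * a j := by
      have h5 : (jk : ℕ) * a jk ≤ ∑ j : Fin k, (j : ℕ) * a j :=
        Finset.single_le_sum (f := fun j : Fin k => (j : ℕ) * a j)
          (fun j _ => Nat.zero_le _) (Finset.mem_univ jk)
      rw [hjkv] at h5
      exact h5
    have hterm2 : (k - 1) ≤ (k - 1) * a jk := Nat.le_mul_of_pos_right _ (ha jk)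
    omega
  have hPle : A 1 + τ ≤ k * τ + 2 := by
    rw [hA1]
    have e : (k - 1) * τ + τ = k * τ := by
      have h1 : k - 1 + 1 = k := by omega
      calc (k - 1) * τ + τ = ((k - 1) + 1) * τ := by ring
        _ = k * τ := by rw [h1]
    omega
  -- the master identity
  have hmain : ∀ n, 1 ≤ n → A n = τ * ((n-1)*k) + A 1 +
      ∑ j : Fin k, a j * cntv A (B ((n-1)*k + (j : ℕ) + 1)) := by
    intro n hn
    rw [hrec n hn]
    have hstep : ∀ j : Fin k, a j * B ((n-1)*k + (j : ℕ) + 1) =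
        a j * ((n-1)*k + (j : ℕ) + 1) + a j * cntv A (B ((n-1)*k + (j : ℕ) + 1)) := by
      intro j
      conv_lhs => rw [hBid ((n-1)*k + (j : ℕ) + 1) (by omega)]
      ring
    rw [Finset.sum_congr rfl (fun j _ => hstep j), Finset.sum_add_distrib]
    congr 1
    rw [hA1]
    have hstep2 : ∀ j : Fin k, a j * ((n-1)*k + (j : ℕ) + 1) =
        a j * ((n-1)*k) + ((j : ℕ) + 1) * a j := by
      intro j; ring
    rw [Finset.sum_congr rfl (fun j _ => hstep2 j), Finset.sum_add_distrib,
      ← Finset.sum_mul, hτdef]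
  -- the key bounds, by strong induction
  have key : ∀ n, 1 ≤ n → (k*τ+1)*(n-1) + A 1 + 1 ≤ A n + τ ∧
      A n + 1 ≤ (k*τ+1)*(n-1) + A 1 + τ := by
    intro n
    induction n using Nat.strong_induction_on with
    | _ n IH =>
      intro hn
      obtain ⟨n', rfl⟩ : ∃ n', n = n' + 1 := ⟨n - 1, by omega⟩
      simp only [Nat.add_sub_cancel]
      rcases Nat.eq_zero_or_pos n' with rfl | hn'
      · norm_num
        omega
      -- n = n'+1 ≥ 2
      obtain ⟨m, hm⟩ : ∃ m, m = n' * k := ⟨_, rfl⟩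
      obtain ⟨q, ρ, hqρ, hρτ⟩ : ∃ q ρ, τ * q + ρ = n' ∧ ρ < τ :=
        ⟨n' / τ, n' % τ, Nat.div_add_mod n' τ, Nat.mod_lt _ hτpos⟩
      -- A (n'+1) is bigger than all the involved B's
      have hAnval : A (n'+1) = ∑ j : Fin k, a j * B (m + (j : ℕ) + 1) := by
        have h0 := hrec (n'+1) (by omega)
        simp only [Nat.add_sub_cancel] at h0
        rw [← hm] at h0
        exact h0
      have hAngt : ∀ jj, 1 ≤ jj → jj ≤ k → B (m + jj) < A (n'+1) := by
        intro jj h1 h2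
        have h3 := two_term (fun j => B (m + (j : ℕ) + 1))
        rw [← hAnval, hj0v, hjkv] at h3
        have ek2 : m + (k - 1) + 1 = m + k := by omega
        rw [ek2] at h3
        have h4 : 1 ≤ a j0 * B (m + 0 + 1) :=
          Nat.mul_pos (ha j0) (hBpos (m+0+1) (by omega))
        have h5 : B (m + k) ≤ a jk * B (m + k) := Nat.le_mul_of_pos_left _ (ha jk)
        have h6 : B (m + jj) ≤ B (m + k) := hBmono (m+jj) (m+k) (by omega) (by omega)
        omega
      -- upper bound on each count
      have hKle : ∀ j : Fin k, cntv A (B (m + (j : ℕ) + 1)) ≤ q + 1 := by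
        intro j
        have hsub : (Finset.Icc 1 (B (m + (j:ℕ) + 1))).filter
            (fun x => ∃ i, 1 ≤ i ∧ A i = x) ⊆ (Finset.Icc 1 (q+1)).image A := by
          intro x hx
          simp only [Finset.mem_filter, Finset.mem_Icc] at hx
          obtain ⟨⟨hx1, hxN⟩, i, hi1, rfl⟩ := hx
          have hiq : i ≤ q + 1 := by
            have hne2 : A i ≠ B (m + (j:ℕ) + 1) := by
              intro he
              rcases hdich (A i) (hApos i hi1) with ⟨_, hB⟩ | ⟨hA2, _⟩
              · exact hB ⟨m + (j:ℕ) + 1, by omega, he.symm⟩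
              · exact hA2 ⟨i, hi1, rfl⟩
            have hlt : A i < B ((m + (j:ℕ)) + 1) := by omega
            have hc1 : cntv B (A i) ≤ m + (j:ℕ) := cntv_le hBm hlt
            have hc2 : A i = i + cntv B (A i) := hAid i hi1
            have hin : i ≤ n' := by
              by_contra hc
              have h7 : A (n'+1) ≤ A i := hAmono (n'+1) i (by omega) (by omega)
              have h8 := hAngt ((j:ℕ)+1) (by omega) (by have := j.isLt; omega)
              have he2 : m + (j:ℕ) + 1 = m + ((j:ℕ)+1) := by omega
              rw [he2] at hlt
              omega
            have hIH := (IH i (by omega) hi1).1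
            obtain ⟨i', rfl⟩ : ∃ i', i = i' + 1 := ⟨i - 1, by omega⟩
            simp only [Nat.add_sub_cancel] at hIH
            have hj' : (j : ℕ) ≤ k - 1 := by have := j.isLt; omega
            have hexp : (k*τ+1)*i' = k*τ*i' + i' := by ring
            have hloc : k*τ*i' ≤ m := by omega
            have hτi : τ * i' ≤ n' := by
              have h9 : τ * i' * k ≤ n' * k := by
                calc τ * i' * k = k*τ*i' := by ring
                  _ ≤ m := hloc
                  _ = n' * k := hm
              exact Nat.le_of_mul_le_mul_right h9 hkpos
            have : i' ≤ q := by
              by_contra hc2'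
              have h10 : τ*(q+1) ≤ τ*i' := Nat.mul_le_mul_left _ (by omega)
              have hexp4 : τ*(q+1) = τ*q + τ := by ring
              omega
            omega
          exact Finset.mem_image.2 ⟨i, Finset.mem_Icc.2 ⟨hi1, hiq⟩, rfl⟩
        calc cntv A (B (m + (j:ℕ) + 1)) ≤ ((Finset.Icc 1 (q+1)).image A).card :=
              Finset.card_le_card hsub
          _ ≤ q + 1 := le_trans Finset.card_image_le (by rw [Nat.card_Icc]; omega)
      -- sharp upper bound on the first count when ρ = 0
      have hK1le : ρ = 0 → cntv A (B (m + 1)) ≤ q := by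
        intro hρ0
        have hq1 : 1 ≤ q := by
          rcases Nat.eq_zero_or_pos q with h0 | h1
          · exfalso; subst h0; simp at hqρ; omega
          · exact h1
        have hmq : m = k*τ*q := by
          rw [hm]
          have he3 : n' = τ * q := by omega
          rw [he3]; ring
        have hsub : (Finset.Icc 1 (B (m + 1))).filter
            (fun x => ∃ i, 1 ≤ i ∧ A i = x) ⊆ (Finset.Icc 1 q).image A := by
          intro x hx
          simp only [Finset.mem_filter, Finset.mem_Icc] at hx
          obtain ⟨⟨hx1, hxN⟩, i, hi1, rfl⟩ := hx
          have hiq : i ≤ q := by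
            have hne2 : A i ≠ B (m + 1) := by
              intro he
              rcases hdich (A i) (hApos i hi1) with ⟨_, hB⟩ | ⟨hA2, _⟩
              · exact hB ⟨m + 1, by omega, he.symm⟩
              · exact hA2 ⟨i, hi1, rfl⟩
            have hlt : A i < B (m + 1) := by omega
            have hc1 : cntv B (A i) ≤ m := cntv_le hBm hlt
            have hc2 : A i = i + cntv B (A i) := hAid i hi1
            have hin : i ≤ n' := by
              by_contra hc
              have h7 : A (n'+1) ≤ A i := hAmono (n'+1) i (by omega) (by omega)
              have h8 := hAngt 1 le_rfl (by omega)
              omega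
            have hIH := (IH i (by omega) hi1).1
            obtain ⟨i', rfl⟩ : ∃ i', i = i' + 1 := ⟨i - 1, by omega⟩
            simp only [Nat.add_sub_cancel] at hIH
            have hexp : (k*τ+1)*i' = k*τ*i' + i' := by ring
            have hloc : k*τ*i' < m := by omega
            rw [hmq] at hloc
            have hlt2 : i' < q := by
              by_contra hc2'
              have : k*τ*q ≤ k*τ*i' := Nat.mul_le_mul_left _ (by omega)
              omega
            omega
          exact Finset.mem_image.2 ⟨i, Finset.mem_Icc.2 ⟨hi1, hiq⟩, rfl⟩
        calc cntv A (B (m + 1)) ≤ ((Finset.Icc 1 q).image A).card :=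
              Finset.card_le_card hsub
          _ ≤ q := le_trans Finset.card_image_le (by rw [Nat.card_Icc]; omega)
      -- lower bound on each count when q ≥ 1
      have hKge : 1 ≤ q → ∀ j : Fin k, q ≤ cntv A (B (m + (j : ℕ) + 1)) := by
        intro hq1 j
        have hqn : q ≤ n' := by
          have h1 : 2 * q ≤ τ * q := Nat.mul_le_mul_right q hτ2
          omega
        have hIHq := (IH q (by omega) hq1).2
        obtain ⟨q', hq'⟩ : ∃ q', q = q' + 1 := ⟨q - 1, by omega⟩
        have hAq : A q < B (m + 1) := by
          by_contra hc
          push_neg at hc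
          have h1 : m + 1 ≤ cntv B (A q) := cntv_ge hBm hBpos (by omega) hc
          have h2 : A q = q + cntv B (A q) := hAid q hq1
          rw [hq'] at hIHq h2 h1
          simp only [Nat.add_sub_cancel] at hIHq
          have h3 : k*τ*(q'+1) ≤ m := by
            have h4 : τ * (q'+1) ≤ n' := by rw [← hq']; omega
            calc k*τ*(q'+1) = (τ*(q'+1))*k := by ring
              _ ≤ n' * k := Nat.mul_le_mul_right _ h4
              _ = m := hm.symm
          have hexp3 : (k*τ+1)*q' + (k*τ+1) = k*τ*(q'+1) + q' + 1 := by ring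
          omega
        have h5 : A q ≤ B (m + (j:ℕ) + 1) := by
          have := hBmono (m+1) (m + (j:ℕ) + 1) (by omega) (by omega)
          omega
        exact cntv_ge hAm hApos hq1 h5
      -- assemble
      have hAn := hmain (n'+1) (by omega)
      simp only [Nat.add_sub_cancel] at hAn
      rw [← hm] at hAn
      have hτm : (k*τ+1) * n' = τ * m + n' := by rw [hm]; ring
      constructor
      · -- lower bound
        rcases Nat.lt_or_ge n' τ with hsm | hlg
        · omega
        · have hq1 : 1 ≤ q := by
            rcases Nat.eq_zero_or_pos q with h0 | h1
            · exfalso; subst h0; simp at hqρ; omega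
            · exact h1
          have hsum : τ * q ≤ ∑ j : Fin k, a j * cntv A (B (m + (j:ℕ) + 1)) := by
            calc τ * q = ∑ j : Fin k, a j * q := by rw [hτdef, Finset.sum_mul]
              _ ≤ _ := Finset.sum_le_sum (fun j _ => Nat.mul_le_mul_left _ (hKge hq1 j))
          omega
      · -- upper bound
        have hexp2 : τ * (q+1) = τ * q + τ := by ring
        have hsumle : ∑ j : Fin k, a j * cntv A (B (m + (j:ℕ) + 1)) + 1 ≤ n' + τ := by
          rcases Nat.eq_zero_or_pos ρ with hρ0 | hρ1
          · have hstrict : ∑ j : Fin k, a j * cntv A (B (m + (j:ℕ) + 1)) <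
                ∑ j : Fin k, a j * (q+1) := by
              apply Finset.sum_lt_sum
              · exact fun j _ => Nat.mul_le_mul_left _ (hKle j)
              · refine ⟨j0, Finset.mem_univ _, ?_⟩
                have e0 : m + (j0 : ℕ) + 1 = m + 1 := by rw [hj0v]
                have h1 : cntv A (B (m + (j0:ℕ) + 1)) ≤ q := by
                  rw [e0]
                  exact hK1le hρ0
                calc a j0 * cntv A (B (m + (j0:ℕ) + 1)) ≤ a j0 * q :=
                      Nat.mul_le_mul_left _ h1
                  _ < a j0 * (q+1) := by nlinarith [ha j0]
            have hev : ∑ j : Fin k, a j * (q+1) = τ * (q+1) := by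
              rw [hτdef, Finset.sum_mul]
            omega
          · have hle2 : ∑ j : Fin k, a j * cntv A (B (m + (j:ℕ) + 1)) ≤ τ * (q+1) := by
              calc _ ≤ ∑ j : Fin k, a j * (q+1) :=
                    Finset.sum_le_sum (fun j _ => Nat.mul_le_mul_left _ (hKle j))
                _ = τ * (q+1) := by rw [hτdef, Finset.sum_mul]
            omega
        omega
  -- conclude
  intro n hn
  obtain ⟨h1, h2⟩ := key n hn
  obtain ⟨n', rfl⟩ : ∃ n', n = n' + 1 := ⟨n - 1, by omega⟩
  simp only [Nat.add_sub_cancel] at h1 h2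
  have e : ((n' + 1 : ℕ) : ℤ) - 1 = (n' : ℤ) := by push_cast; ring
  constructor
  · rw [e]
    have h1' : ((k*τ+1)*n' + A 1 + 1 : ℤ) ≤ (A (n'+1) : ℤ) + (τ : ℤ) := by exact_mod_cast h1
    push_cast at h1' ⊢
    linarith
  · rw [e]
    have h2' : ((A (n'+1) : ℕ) + 1 : ℤ) ≤ ((k*τ+1)*n' + A 1 + τ : ℤ) := by exact_mod_cast h2
    push_cast at h2' ⊢
    linarith
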